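/- (Thermodynamic uncertainty relation.) Let ψ be twice continuously differentiable and convex, and let η : ℝ → E satisfy Newton's law η̇(t) = −λ(η(t) − η_q). For τ > 0 define the squared Riemannian speed Q(t) := ⟪η̇(t), H(η(t)) η̇(t)⟫ ≥ 0 and the Riemannian length L := ∫₀^τ √(Q(t)) dt. Then the dissipated availability satisfies F(η(0)) − F(η(τ)) = (1/λ) ∫₀^τ Q(t) dt ≥ L² / (λ τ). -/

import Mathlib

open scoped RealInnerProductSpace

lemma monotone_hasDerivAt_nonneg {φ : ℝ → ℝ} (hm : Monotone φ) {c x : ℝ}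
    (h : HasDerivAt φ c x) : 0 ≤ c := by
  have h1 : Filter.Tendsto (slope φ x) (nhdsWithin x (Set.Ioi x)) (nhds c) :=
    (hasDerivAt_iff_tendsto_slope.mp h).mono_left
      (nhdsWithin_mono _ fun y hy => ne_of_gt hy)
  refine ge_of_tendsto h1 ?_
  filter_upwards [self_mem_nhdsWithin] with y hy
  have hxy : x < y := hy
  rw [slope_def_field]
  exact div_nonneg (sub_nonneg.2 (hm hxy.le)) (sub_nonneg.2 hxy.le)

/-- **Thermodynamic uncertainty relation.** Along a Newtonian relaxation of a convex
`C²` potential, the dissipated availability over `[0, τ]` equals `(1/λ) ∫₀^τ Q` where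
`Q` is the squared Riemannian speed, and is bounded below by `L²/(λτ)` where `L` is the
Riemannian length of the path. -/
theorem thermodynamic_uncertainty_relation
    (n : ℕ) (ψ : EuclideanSpace ℝ (Fin n) → ℝ) (hψ : ContDiff ℝ 2 ψ)
    (hconv : ConvexOn ℝ Set.univ ψ)
    (ηq : EuclideanSpace ℝ (Fin n)) (lam : ℝ) (hlam : 0 < lam)
    (H : EuclideanSpace ℝ (Fin n) →
      EuclideanSpace ℝ (Fin n) →L[ℝ] EuclideanSpace ℝ (Fin n))
    (hH : ∀ η, H η = fderiv ℝ (gradient ψ) η)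
    (F : EuclideanSpace ℝ (Fin n) → ℝ)
    (hF : ∀ η, F η = ψ ηq - ψ η - ⟪gradient ψ η, ηq - η⟫)
    (η : ℝ → EuclideanSpace ℝ (Fin n)) (hη : Differentiable ℝ η)
    (hnewton : ∀ t, deriv η t = (-lam) • (η t - ηq))
    (τ : ℝ) (hτ : 0 < τ)
    (Q : ℝ → ℝ) (hQ : ∀ t, Q t = ⟪deriv η t, H (η t) (deriv η t)⟫)
    (L : ℝ) (hL : L = ∫ t in (0:ℝ)..τ, Real.sqrt (Q t)) :
    (∀ t, 0 ≤ Q t) ∧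
    F (η 0) - F (η τ) = (1 / lam) * ∫ t in (0:ℝ)..τ, Q t ∧
    L ^ 2 / (lam * τ) ≤ F (η 0) - F (η τ) := by
  -- basic regularity of the gradient
  have hG : ContDiff ℝ 1 (gradient ψ) := by
    have h1 : ContDiff ℝ 1 (fderiv ℝ ψ) := hψ.fderiv_right (by norm_num)
    exact (InnerProductSpace.toDual ℝ (EuclideanSpace ℝ (Fin n))).symm.contDiff.comp h1
  have hGdiff : Differentiable ℝ (gradient ψ) := hG.differentiable one_ne_zero
  have hHcont : Continuous (fderiv ℝ (gradient ψ)) := hG.continuous_fderiv one_ne_zero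
  have hψfd : ∀ x : EuclideanSpace ℝ (Fin n), HasFDerivAt ψ
      ((InnerProductSpace.toDual ℝ (EuclideanSpace ℝ (Fin n))) (gradient ψ x)) x := by
    intro x
    have h1 := (hψ.differentiable two_ne_zero x).hasFDerivAt
    have h2 : (InnerProductSpace.toDual ℝ (EuclideanSpace ℝ (Fin n))) (gradient ψ x) = fderiv ℝ ψ x :=
      (InnerProductSpace.toDual ℝ (EuclideanSpace ℝ (Fin n))).apply_symm_apply _
    rwa [h2]
  -- continuity of deriv η and of Q
  have hderivη : deriv η = fun t => (-lam) • (η t - ηq) := funext hnewton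
  have hdc : Continuous (deriv η) := by
    rw [hderivη]; exact ((hη.continuous.sub continuous_const).const_smul (-lam))
  have hQcont : Continuous Q := by
    have : Continuous fun t => ⟪deriv η t, (fderiv ℝ (gradient ψ) (η t)) (deriv η t)⟫ :=
      hdc.inner ((hHcont.comp hη.continuous).clm_apply hdc)
    have hq : Q = fun t => ⟪deriv η t, (fderiv ℝ (gradient ψ) (η t)) (deriv η t)⟫ := by
      funext t; rw [hQ, hH]
    rw [hq]; exact this
  -- Part 1 : nonnegativity of Q
  have hQnonneg : ∀ t, 0 ≤ Q t := by
    intro t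
    set x := η t with hx
    set v := deriv η t with hv
    have hcurve : ∀ s : ℝ, HasDerivAt (fun s : ℝ => x + s • v) v s := by
      intro s
      simpa using ((hasDerivAt_id s).smul_const v).const_add x
    have hgconv : ConvexOn ℝ Set.univ (fun s : ℝ => ψ (x + s • v)) := by
      have h := hconv.comp_affineMap (AffineMap.lineMap x (x + v))
      have he : (ψ ∘ ⇑(AffineMap.lineMap x (x + v))) = fun s : ℝ => ψ (x + s • v) := by
        funext s
        simp [AffineMap.lineMap_apply, vsub_eq_sub, vadd_eq_add]
        rw [add_comm]
      rw [he] at h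
      simpa using h
    have hg' : ∀ s : ℝ, HasDerivAt (fun s : ℝ => ψ (x + s • v))
        ⟪gradient ψ (x + s • v), v⟫ s := by
      intro s
      have := (hψfd (x + s • v)).comp_hasDerivAt s (hcurve s)
      simp at this ⊢
      exact this
    have hmono : Monotone (deriv fun s : ℝ => ψ (x + s • v)) := by
      have := hgconv.monotoneOn_deriv (fun s _ => (hg' s).differentiableAt)
      exact monotoneOn_univ.mp this
    have hderiv_g : (deriv fun s : ℝ => ψ (x + s • v))
        = fun s => ⟪gradient ψ (x + s • v), v⟫ := funext fun s => (hg' s).deriv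
    rw [hderiv_g] at hmono
    have hGc : HasDerivAt (fun s : ℝ => gradient ψ (x + s • v))
        ((fderiv ℝ (gradient ψ) (x + (0:ℝ) • v)) v) 0 :=
      (hGdiff _).hasFDerivAt.comp_hasDerivAt 0 (hcurve 0)
    have hφ : HasDerivAt (fun s : ℝ => ⟪gradient ψ (x + s • v), v⟫)
        ⟪(fderiv ℝ (gradient ψ) (x + (0:ℝ) • v)) v, v⟫ 0 := by
      simpa using hGc.inner ℝ (hasDerivAt_const 0 v)
    have h0 := monotone_hasDerivAt_nonneg hmono hφ
    rw [hQ, hH]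
    simp only [zero_smul, add_zero] at h0
    rw [real_inner_comm]
    exact h0
  -- the key pointwise derivative
  have key : ∀ t, HasDerivAt (fun s => F (η s)) (-(1 / lam * Q t)) t := by
    intro t
    set x := η t with hx
    set v := deriv η t with hv
    have hηd : HasDerivAt η v t := (hη t).hasDerivAt
    have h1 : HasDerivAt (fun s => ψ (η s)) ⟪gradient ψ x, v⟫ t := by
      have h1' := (hψfd x).comp_hasDerivAt t hηd
      simp at h1' ⊢
      exact h1'
    have hGd : HasDerivAt (fun s => gradient ψ (η s))
        ((fderiv ℝ (gradient ψ) x) v) t :=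
      (hGdiff x).hasFDerivAt.comp_hasDerivAt t hηd
    have h3 : HasDerivAt (fun s => ηq - η s) (-v) t := hηd.const_sub ηq
    have h4 : HasDerivAt (fun s => ⟪gradient ψ (η s), ηq - η s⟫)
        (⟪gradient ψ x, -v⟫ + ⟪(fderiv ℝ (gradient ψ) x) v, ηq - x⟫) t :=
      hGd.inner ℝ h3
    have h5 : HasDerivAt (fun s => F (η s))
        (0 - ⟪gradient ψ x, v⟫
          - (⟪gradient ψ x, -v⟫ + ⟪(fderiv ℝ (gradient ψ) x) v, ηq - x⟫)) t := by
      have heq : (fun s => F (η s))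
          = fun s => ψ ηq - ψ (η s) - ⟪gradient ψ (η s), ηq - η s⟫ := by
        funext s; rw [hF]
      rw [heq]
      exact ((hasDerivAt_const t (ψ ηq)).sub h1).sub h4
    convert h5 using 1
    have hv' : ηq - x = (1 / lam) • v := by
      rw [hv, hnewton t, ← hx, smul_smul]
      have : 1 / lam * -lam = -1 := by field_simp
      rw [this, neg_one_smul, neg_sub]
    rw [hv', real_inner_smul_right, inner_neg_right, hQ, hH, ← hx, ← hv]
    rw [real_inner_comm v ((fderiv ℝ (gradient ψ) x) v)]
    ring
  -- Part 2 : the energy identity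
  have hint : IntervalIntegrable (fun t => -(1 / lam * Q t)) MeasureTheory.volume 0 τ :=
    ((continuous_const.mul hQcont).neg).intervalIntegrable 0 τ
  have hFTC := intervalIntegral.integral_eq_sub_of_hasDerivAt
    (f := fun s => F (η s)) (fun t _ => key t) hint
  have hQint : IntervalIntegrable Q MeasureTheory.volume 0 τ := hQcont.intervalIntegrable 0 τ
  have hiden : F (η 0) - F (η τ) = (1 / lam) * ∫ t in (0:ℝ)..τ, Q t := by
    rw [intervalIntegral.integral_neg, intervalIntegral.integral_const_mul] at hFTC
    linarith
  refine ⟨hQnonneg, hiden, ?_⟩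
  -- Part 3 : Cauchy–Schwarz
  have hsqint : IntervalIntegrable (fun t => Real.sqrt (Q t)) MeasureTheory.volume 0 τ :=
    (Real.continuous_sqrt.comp hQcont).intervalIntegrable 0 τ
  set c : ℝ := L / τ with hc
  set I : ℝ := ∫ t in (0:ℝ)..τ, Q t with hI
  have hpt : ∀ t : ℝ, (Real.sqrt (Q t) - c) ^ 2
      = Q t - 2 * c * Real.sqrt (Q t) + c ^ 2 := by
    intro t
    rw [sub_sq, Real.sq_sqrt (hQnonneg t)]
    ring
  have hnn : (0:ℝ) ≤ ∫ t in (0:ℝ)..τ, (Real.sqrt (Q t) - c) ^ 2 :=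
    intervalIntegral.integral_nonneg hτ.le fun u _ => sq_nonneg _
  have hexp : (∫ t in (0:ℝ)..τ, (Real.sqrt (Q t) - c) ^ 2)
      = I - 2 * c * L + c ^ 2 * τ := by
    simp only [hpt]
    rw [intervalIntegral.integral_add ((hQint.sub ((hsqint.const_mul (2 * c)))))
        intervalIntegrable_const,
      intervalIntegral.integral_sub hQint (hsqint.const_mul (2 * c)),
      intervalIntegral.integral_const_mul, intervalIntegral.integral_const]
    rw [← hL, ← hI]
    ring_nf
  have hCS : L ^ 2 ≤ τ * I := by
    rw [hexp] at hnn
    have hτ' : τ ≠ 0 := ne_of_gt hτ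
    have hcτ : c * τ = L := by rw [hc]; field_simp
    have h1 : c ^ 2 * τ = c * L := by rw [pow_two, mul_assoc, hcτ]
    have h2 : c * L = L ^ 2 / τ := by rw [hc]; ring
    have h3 : L ^ 2 / τ ≤ I := by nlinarith [hnn]
    have := (div_le_iff₀ hτ).mp h3
    linarith
  rw [hiden]
  rw [div_le_iff₀ (by positivity : (0:ℝ) < lam * τ)]
  have : 1 / lam * I * (lam * τ) = τ * I := by field_simp
  rw [this]
  exact hCS
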